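/- For a > 3, let SVC_a be the Smith–Volterra–Cantor set: starting from [0,1], at step k (k ≥ 1) remove from each of the 2^{k-1} remaining closed intervals a centered open interval of length a^{-k}. Then SVC_a has positive Lebesgue measure (its measure is 1 − Σ_{k≥1} 2^{k-1} a^{-k} = 1 − 1/(a−2) > 0), its Minkowski dimension equals 1, while the number of complementary intervals of length exceeding 2t grows like (2t)^{-log_a 2}, so that inf{q : limsup_{t→0⁺} t^q β₀(SVC_a;t) = 0} = log_a 2 < 1. -/

import Mathlib

open Metric MeasureTheory Filter Set Topology
open scoped ENNReal

noncomputable section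

set_option maxHeartbeats 1000000

/-- `t ^ p → 0` as `t → 0⁺` for `p > 0`. -/
lemma aux_rpow_zero {p : ℝ} (hp : 0 < p) :
    Tendsto (fun t : ℝ => t ^ p) (𝓝[>] (0:ℝ)) (𝓝 0) := by
  have h1 : Tendsto (fun t : ℝ => ((t⁻¹) ^ p)⁻¹) (𝓝[>] (0:ℝ)) (𝓝 0) :=
    ((tendsto_rpow_atTop hp).comp tendsto_inv_nhdsGT_zero).inv_tendsto_atTop
  refine h1.congr' ?_
  filter_upwards [self_mem_nhdsWithin] with t ht
  rw [Real.inv_rpow (le_of_lt ht), inv_inv]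

/-- the Smith–Volterra–Cantor set `SVC_a` (`a > 3`), described as a
compact subset `A ⊆ [0,1]` whose complement in `[0,1]` is the disjoint union of, for
each `k ≥ 0`, `2^k` open intervals of length `a^{-(k+1)}`, has Lebesgue measure
`1 − 1/(a−2) > 0`, Minkowski dimension `1`, while the scaling exponent of its basic
function `β₀(A;t) = 1 + #{complementary intervals of length > 2t}` equals
`log_a 2 < 1`. -/
theorem smith_volterra_cantor (a : ℝ) (ha : 3 < a)
    (A : Set ℝ) (hA : IsCompact A) (hsub : A ⊆ Set.Icc 0 1)
    (I : ℕ → ℕ → Set ℝ)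
    (hIlen : ∀ k i, i < 2 ^ k → ∃ c : ℝ, I k i = Set.Ioo c (c + a ^ (-(k + 1 : ℤ))))
    (hdisj : ∀ k i k' i', i < 2 ^ k → i' < 2 ^ k' → (k, i) ≠ (k', i') →
      Disjoint (I k i) (I k' i'))
    (hcompl : Set.Icc (0:ℝ) 1 \ A = ⋃ k, ⋃ i ∈ Finset.range (2 ^ k), I k i) :
    volume A = ENNReal.ofReal (1 - 1 / (a - 2)) ∧
    0 < 1 - 1 / (a - 2) ∧
    sInf {q : ℝ | 0 ≤ q ∧
        Filter.limsup (fun ε : ℝ =>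
          ENNReal.ofReal (ε ^ (q - 1)) * volume (Metric.cthickening ε A)) (𝓝[>] 0)
          = 0} = 1 ∧
    sInf {q : ℝ |
        Filter.limsup (fun t : ℝ =>
          ((t ^ q * (1 + (Set.ncard {p : ℕ × ℕ |
              p.2 < 2 ^ p.1 ∧ 2 * t < a ^ (-(p.1 + 1 : ℤ))} : ℝ)) : ℝ) : EReal))
          (𝓝[>] 0) = (0 : EReal)} = Real.logb a 2 ∧
    Real.logb a 2 < 1 := by
  have ha0 : (0:ℝ) < a := by linarith
  have ha1 : (1:ℝ) < a := by linarith
  -- ## Part 1 : the measure of A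
  set U : Set ℝ := ⋃ k, ⋃ i ∈ Finset.range (2 ^ k), I k i with hUdef
  set V : ℕ → Set ℝ := fun k => ⋃ i ∈ Finset.range (2 ^ k), I k i with hVdef
  have hUV : U = ⋃ k, V k := rfl
  have hUsub : U ⊆ Set.Icc 0 1 := by rw [← hcompl]; exact Set.diff_subset
  have hAU : A = Set.Icc 0 1 \ U := by rw [← hcompl, Set.diff_diff_cancel_left hsub]
  have hImeas : ∀ k i, i < 2 ^ k → MeasurableSet (I k i) := by
    intro k i hi
    obtain ⟨c, hc⟩ := hIlen k i hi
    rw [hc]; exact measurableSet_Ioo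
  have hIvol : ∀ k i, i < 2 ^ k → volume (I k i) = ENNReal.ofReal (a ^ (-(k + 1 : ℤ))) := by
    intro k i hi
    obtain ⟨c, hc⟩ := hIlen k i hi
    rw [hc, Real.volume_Ioo, add_sub_cancel_left]
  have hVmeas : ∀ k, MeasurableSet (V k) := by
    intro k
    exact Finset.measurableSet_biUnion _ (fun i hi => hImeas k i (Finset.mem_range.1 hi))
  have hVvol : ∀ k, volume (V k) = 2 ^ k * ENNReal.ofReal (a ^ (-(k + 1 : ℤ))) := by
    intro k
    rw [hVdef]
    rw [measure_biUnion_finset ?_ (fun i hi => hImeas k i (Finset.mem_range.1 hi))]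
    · rw [Finset.sum_congr rfl (fun i hi => hIvol k i (Finset.mem_range.1 hi)),
        Finset.sum_const, Finset.card_range, nsmul_eq_mul]
      push_cast
      ring
    · intro i hi j hj hij
      exact hdisj k i k j (Finset.mem_range.1 hi) (Finset.mem_range.1 hj) (by simp [hij])
  have hVdisj : Pairwise (Function.onFun Disjoint V) := by
    intro k k' hkk'
    simp only [Function.onFun, hVdef, Set.disjoint_iUnion_left, Set.disjoint_iUnion_right]
    intro i hi j hj
    exact (hdisj k' i k j (Finset.mem_range.1 hi) (Finset.mem_range.1 hj)
      (by simp [hkk'.symm])).symm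
  have hUvol : volume U = ENNReal.ofReal (1 / (a - 2)) := by
    rw [hUV, measure_iUnion hVdisj hVmeas]
    simp_rw [hVvol]
    have hterm : ∀ k : ℕ, (2:ℝ≥0∞) ^ k * ENNReal.ofReal (a ^ (-(k + 1 : ℤ)))
        = ENNReal.ofReal ((1/a) * (2/a) ^ k) := by
      intro k
      have h1 : ((2:ℝ≥0∞)) ^ k = ENNReal.ofReal ((2:ℝ) ^ k) := by
        rw [ENNReal.ofReal_pow (by norm_num)]
        norm_num
      rw [h1, ← ENNReal.ofReal_mul (by positivity)]
      congr 1
      rw [zpow_neg, zpow_add₀ (ne_of_gt ha0), zpow_natCast, zpow_one]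
      field_simp
      rw [← mul_pow, mul_div_cancel₀ _ (ne_of_gt ha0)]
    simp_rw [hterm]
    have hr : (2:ℝ)/a < 1 := by rw [div_lt_one ha0]; linarith
    have hr0 : (0:ℝ) ≤ 2/a := by positivity
    have hsum : Summable (fun k : ℕ => (1/a) * (2/a) ^ k) :=
      (summable_geometric_of_lt_one hr0 hr).mul_left _
    rw [← ENNReal.ofReal_tsum_of_nonneg (fun k => by positivity) hsum]
    congr 1
    rw [tsum_mul_left, tsum_geometric_of_lt_one hr0 hr]
    field_simp
  have hUne : volume U ≠ ⊤ := by
    rw [hUvol]; exact ENNReal.ofReal_ne_top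
  have hUmeas : NullMeasurableSet U volume := by
    rw [hUV]; exact (MeasurableSet.iUnion hVmeas).nullMeasurableSet
  have hvolA : volume A = ENNReal.ofReal (1 - 1 / (a - 2)) := by
    rw [hAU, measure_diff hUsub hUmeas hUne, Real.volume_Icc, hUvol,
      ← ENNReal.ofReal_sub _ (one_div_nonneg.mpr (by linarith))]
    norm_num
  -- ## Part 2 : positivity
  have hposR : 0 < 1 - 1 / (a - 2) := by
    have h1 : 1 / (a - 2) < 1 := by
      rw [div_lt_one (by linarith)]; linarith
    linarith
  have hpos : 0 < volume A := by
    rw [hvolA]; exact ENNReal.ofReal_pos.2 hposR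
  refine ⟨hvolA, hposR, ?_, ?_, ?_⟩
  -- ## Part 3 : Minkowski dimension is 1
  · have hset : {q : ℝ | 0 ≤ q ∧
        Filter.limsup (fun ε : ℝ =>
          ENNReal.ofReal (ε ^ (q - 1)) * volume (Metric.cthickening ε A)) (𝓝[>] 0)
          = 0} = Set.Ioi 1 := by
      ext q
      simp only [Set.mem_setOf_eq, Set.mem_Ioi]
      constructor
      · rintro ⟨hq0, hlim⟩
        by_contra h
        push_neg at h
        have hfreq : ∀ᶠ ε in 𝓝[>] (0:ℝ), volume A ≤
            ENNReal.ofReal (ε ^ (q - 1)) * volume (Metric.cthickening ε A) := by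
          filter_upwards [Ioo_mem_nhdsGT one_pos]
            with ε hε
          have h1 : (1:ℝ≥0∞) ≤ ENNReal.ofReal (ε ^ (q - 1)) := by
            rw [← ENNReal.ofReal_one]
            exact ENNReal.ofReal_le_ofReal
              (Real.one_le_rpow_of_pos_of_le_one_of_nonpos hε.1 hε.2.le (by linarith))
          calc volume A ≤ volume (Metric.cthickening ε A) :=
                measure_mono (Metric.self_subset_cthickening A)
            _ = 1 * volume (Metric.cthickening ε A) := (one_mul _).symm
            _ ≤ _ := mul_le_mul_left h1 _
        have hle : volume A ≤ 0 := by
          rw [← hlim]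
          exact le_limsup_of_frequently_le' hfreq.frequently
        exact hpos.ne' (le_antisymm hle (zero_le))
      · intro hq
        refine ⟨by linarith, ?_⟩
        have hub : ∀ᶠ ε in 𝓝[>] (0:ℝ),
            ENNReal.ofReal (ε ^ (q - 1)) * volume (Metric.cthickening ε A)
              ≤ ENNReal.ofReal (ε ^ (q - 1)) * ENNReal.ofReal 3 := by
          filter_upwards [Ioo_mem_nhdsGT one_pos]
            with ε hε
          refine mul_le_mul_right ?_ _
          have hIccBall : Set.Icc (0:ℝ) 1 = Metric.closedBall (1/2 : ℝ) (1/2) := by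
            rw [Real.Icc_eq_closedBall]; norm_num
          have hsub2 : Metric.cthickening ε A ⊆ Metric.closedBall (1/2 : ℝ) (ε + 1/2) := by
            have hcb := cthickening_closedBall (E := ℝ) hε.1.le
              (by norm_num : (0:ℝ) ≤ 1/2) (1/2 : ℝ)
            rw [← hcb, ← hIccBall]
            exact Metric.cthickening_subset_of_subset ε hsub
          calc volume (Metric.cthickening ε A)
              ≤ volume (Metric.closedBall (1/2:ℝ) (ε + 1/2)) := measure_mono hsub2
            _ = ENNReal.ofReal (2 * (ε + 1/2)) := by rw [Real.volume_closedBall]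
            _ ≤ ENNReal.ofReal 3 := ENNReal.ofReal_le_ofReal (by nlinarith [hε.2])
        have htend : Tendsto (fun ε : ℝ => ENNReal.ofReal (ε ^ (q - 1)) * ENNReal.ofReal 3)
            (𝓝[>] (0:ℝ)) (𝓝 0) := by
          have h0 : Tendsto (fun ε : ℝ => ENNReal.ofReal (ε ^ (q - 1)))
              (𝓝[>] (0:ℝ)) (𝓝 0) := by
            rw [← ENNReal.ofReal_zero]
            exact (ENNReal.continuous_ofReal.tendsto 0).comp (aux_rpow_zero (by linarith))
          have h1 := ENNReal.Tendsto.mul_const (b := ENNReal.ofReal 3) h0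
            (Or.inr ENNReal.ofReal_ne_top)
          rw [zero_mul] at h1
          exact h1
        have htend2 : Tendsto (fun ε : ℝ =>
            ENNReal.ofReal (ε ^ (q - 1)) * volume (Metric.cthickening ε A))
            (𝓝[>] (0:ℝ)) (𝓝 0) :=
          tendsto_of_tendsto_of_tendsto_of_le_of_le' tendsto_const_nhds htend
            (Eventually.of_forall fun _ => zero_le) hub
        exact htend2.limsup_eq
    rw [hset]
    exact csInf_Ioi
  -- ## Part 4 : scaling exponent of the basic function
  · set d := Real.logb a 2 with hd
    have h2dpos : (0:ℝ) < (2:ℝ) ^ d := Real.rpow_pos_of_pos two_pos d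
    have hd0 : 0 < d := Real.logb_pos ha1 (by norm_num)
    have h2apos : (0:ℝ) < 1/(2*a) := by positivity
    have h2a1 : 1/(2*a) < 1 := by rw [div_lt_one (by linarith)]; linarith
    -- the counting identity
    have hcount : ∀ t : ℝ, 0 < t →
        (1 + (Set.ncard {p : ℕ × ℕ | p.2 < 2 ^ p.1 ∧ 2 * t < a ^ (-(p.1 + 1 : ℤ))} : ℝ))
          = (2:ℝ) ^ (⌈-Real.logb a (2*t) - 1⌉₊) := by
      intro t ht
      set K := ⌈-Real.logb a (2*t) - 1⌉₊ with hK
      have h2t : 0 < 2*t := by linarith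
      have hcond : ∀ k : ℕ, (2*t < a ^ (-(k + 1 : ℤ))) ↔ k < K := by
        intro k
        have hz : a ^ (-(k + 1 : ℤ)) = a ^ (-((k:ℝ)+1)) := by
          rw [← Real.rpow_intCast a (-(k+1))]
          norm_num
        rw [hz, hK, Nat.lt_ceil, ← Real.logb_lt_iff_lt_rpow ha1 h2t]
        constructor <;> intro h <;> linarith
      have hset : {p : ℕ × ℕ | p.2 < 2 ^ p.1 ∧ 2 * t < a ^ (-(p.1 + 1 : ℤ))}
          = (((Finset.range K).biUnion
              (fun k => ({k} : Finset ℕ) ×ˢ Finset.range (2^k)) : Finset (ℕ × ℕ))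
              : Set (ℕ × ℕ)) := by
        ext p
        simp only [Set.mem_setOf_eq, Finset.coe_biUnion, Finset.coe_sort_coe, Set.mem_iUnion,
          Finset.mem_coe, Finset.mem_product, Finset.mem_singleton, Finset.mem_range, hcond p.1]
        constructor
        · rintro ⟨h1, h2⟩
          exact ⟨p.1, h2, rfl, h1⟩
        · rintro ⟨k, hk, rfl, h2⟩
          exact ⟨h2, hk⟩
      rw [hset, Set.ncard_coe_finset]
      rw [Finset.card_biUnion (by
        intro i hi j hj hij
        simp only [Finset.disjoint_left, Finset.mem_product, Finset.mem_singleton]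
        rintro p ⟨rfl, -⟩ ⟨h, -⟩
        exact hij h)]
      have hcard : ∀ k, (({k} : Finset ℕ) ×ˢ Finset.range (2^k)).card = 2^k := by
        intro k
        rw [Finset.card_product, Finset.card_singleton, Finset.card_range, one_mul]
      rw [Finset.sum_congr rfl (fun k _ => hcard k)]
      push_cast
      rw [geom_sum_eq (by norm_num : (2:ℝ) ≠ 1) K]
      ring
    -- the two-sided bound
    have hbound : ∀ t : ℝ, 0 < t → t < 1/(2*a) →
        (2:ℝ) ^ d * (2:ℝ) ^ (⌈-Real.logb a (2*t) - 1⌉₊) ∈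
          Set.Icc (t ^ (-d) / 2) (t ^ (-d)) := by
      intro t ht htu
      set K := ⌈-Real.logb a (2*t) - 1⌉₊ with hK
      set x := -Real.logb a (2*t) - 1 with hx
      have h2t : 0 < 2*t := by linarith
      have hxpos : 0 < x := by
        have h1 : Real.logb a (2*t) < -1 := by
          rw [Real.logb_lt_iff_lt_rpow ha1 h2t, Real.rpow_neg_one]
          calc 2*t < 2*(1/(2*a)) := by linarith
            _ = a⁻¹ := by field_simp
        simp only [hx]; linarith
      have hxK : x ≤ (K:ℝ) := Nat.le_ceil x
      have hKx : (K:ℝ) < x + 1 := Nat.ceil_lt_add_one hxpos.le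
      have hpow : ∀ y : ℝ, 0 < y → (2:ℝ) ^ (Real.logb a y) = y ^ d := by
        intro y hy
        rw [Real.rpow_def_of_pos (by norm_num : (0:ℝ) < 2), Real.rpow_def_of_pos hy]
        simp only [Real.logb, hd]
        congr 1
        ring
      have h2K : (2:ℝ) ^ K = (2:ℝ) ^ ((K:ℕ):ℝ) := (Real.rpow_natCast 2 K).symm
      have hmono := fun {p q : ℝ} (h : p ≤ q) =>
        Real.rpow_le_rpow_left_iff (by norm_num : (1:ℝ) < 2) |>.mpr h
      have h2x : (2:ℝ) ^ x = (2*t) ^ (-d) / 2 := by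
        rw [hx, show -Real.logb a (2*t) - 1 = (-Real.logb a (2*t)) + (-1) by ring,
          Real.rpow_add (by norm_num : (0:ℝ) < 2), Real.rpow_neg_one,
          Real.rpow_neg (by norm_num : (0:ℝ) ≤ 2), hpow _ h2t, ← Real.rpow_neg h2t.le]
        ring
      have hup : (2:ℝ) ^ K ≤ (2*t) ^ (-d) := by
        calc (2:ℝ) ^ K = (2:ℝ) ^ ((K:ℕ):ℝ) := h2K
          _ ≤ (2:ℝ) ^ (x + 1) := hmono hKx.le
          _ = (2:ℝ) ^ x * 2 := by rw [Real.rpow_add (by norm_num : (0:ℝ) < 2), Real.rpow_one]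
          _ = (2*t) ^ (-d) := by rw [h2x]; ring
      have hlo : (2*t) ^ (-d) / 2 ≤ (2:ℝ) ^ K := by
        calc (2*t) ^ (-d) / 2 = (2:ℝ) ^ x := h2x.symm
          _ ≤ (2:ℝ) ^ ((K:ℕ):ℝ) := hmono hxK
          _ = (2:ℝ) ^ K := h2K.symm
      have hsplit : (2*t) ^ (-d) = 2 ^ (-d) * t ^ (-d) := Real.mul_rpow (by norm_num) ht.le
      have h2d : (2:ℝ) ^ d * (2:ℝ)^(-d) = 1 := by
        rw [← Real.rpow_add (by norm_num : (0:ℝ) < 2)]; simp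
      have hconst : (2:ℝ)^d * (2*t)^(-d) = t^(-d) := by
        rw [hsplit, ← mul_assoc, h2d, one_mul]
      constructor
      · calc t ^ (-d) / 2 = 2^d * ((2*t)^(-d) /2) := by rw [← mul_div_assoc, hconst]
          _ ≤ 2^d * 2^K := mul_le_mul_of_nonneg_left hlo (by positivity)
      · calc (2:ℝ)^d * 2^K ≤ 2^d * (2*t)^(-d) :=
            mul_le_mul_of_nonneg_left hup (by positivity)
          _ = t ^ (-d) := hconst
    -- the set of exponents is exactly (d, ∞)
    have hset4 : {q : ℝ |
        Filter.limsup (fun t : ℝ =>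
          ((t ^ q * (1 + (Set.ncard {p : ℕ × ℕ |
              p.2 < 2 ^ p.1 ∧ 2 * t < a ^ (-(p.1 + 1 : ℤ))} : ℝ)) : ℝ) : EReal))
          (𝓝[>] 0) = (0 : EReal)} = Set.Ioi d := by
      ext q
      simp only [Set.mem_setOf_eq, Set.mem_Ioi]
      have hfb : ∀ t : ℝ, 0 < t → t < 1/(2*a) →
          t ^ q * (1 + (Set.ncard {p : ℕ × ℕ |
              p.2 < 2 ^ p.1 ∧ 2 * t < a ^ (-(p.1 + 1 : ℤ))} : ℝ)) ∈
            Set.Icc (t^(q-d)/2^d/2) (t^(q-d)/2^d) := by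
        intro t ht htu
        have htq : (0:ℝ) < t^q := Real.rpow_pos_of_pos ht q
        have hB := hbound t ht htu
        have e1 : t^q * t^(-d) = t^(q-d) := by
          rw [← Real.rpow_add ht, ← sub_eq_add_neg]
        rw [hcount t ht]
        constructor
        · rw [div_div, div_le_iff₀ (by positivity)]
          calc t^(q-d) = t^q * t^(-d) := e1.symm
            _ ≤ t^q * (2^d * 2 ^ ⌈-Real.logb a (2*t) - 1⌉₊ * 2) := by
                refine mul_le_mul_of_nonneg_left ?_ htq.le
                nlinarith [hB.1]
            _ = t^q * 2 ^ ⌈-Real.logb a (2*t) - 1⌉₊ * (2^d * 2) := by ring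
        · rw [le_div_iff₀ h2dpos]
          calc t^q * 2 ^ ⌈-Real.logb a (2*t) - 1⌉₊ * 2^d
              = t^q * (2^d * 2 ^ ⌈-Real.logb a (2*t) - 1⌉₊) := by ring
            _ ≤ t^q * t^(-d) := mul_le_mul_of_nonneg_left hB.2 htq.le
            _ = t^(q-d) := e1
      constructor
      · intro hlim
        by_contra hq
        push_neg at hq
        have hev : ∀ᶠ t in 𝓝[>] (0:ℝ),
            ((1/((2:ℝ)^d)/2 : ℝ) : EReal) ≤
            ((t ^ q * (1 + (Set.ncard {p : ℕ × ℕ |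
                p.2 < 2 ^ p.1 ∧ 2 * t < a ^ (-(p.1 + 1 : ℤ))} : ℝ)) : ℝ) : EReal) := by
          filter_upwards [Ioo_mem_nhdsGT h2apos]
            with t ht
          have hB := hfb t ht.1 ht.2
          have h1 : (1:ℝ) ≤ t^(q-d) :=
            Real.one_le_rpow_of_pos_of_le_one_of_nonpos ht.1
              (by linarith [ht.2]) (by linarith)
          refine EReal.coe_le_coe_iff.2 ?_
          calc (1:ℝ)/(2:ℝ)^d/2 ≤ t^(q-d)/(2:ℝ)^d/2 := by
                have h2 : (0:ℝ) < (2:ℝ)^d * 2 := by positivity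
                rw [div_div, div_div, div_le_div_iff_of_pos_right h2]
                nlinarith
            _ ≤ _ := hB.1
        have hle := le_limsup_of_frequently_le' hev.frequently
        rw [hlim] at hle
        have : (1/((2:ℝ)^d)/2 : ℝ) ≤ 0 := by
          rw [show ((0:EReal)) = (((0:ℝ)):EReal) from rfl] at hle
          exact EReal.coe_le_coe_iff.1 hle
        have hgt : (0:ℝ) < 1/((2:ℝ)^d)/2 := by positivity
        linarith
      · intro hq
        have htendR : Tendsto (fun t : ℝ => t ^ q * (1 + (Set.ncard {p : ℕ × ℕ |
            p.2 < 2 ^ p.1 ∧ 2 * t < a ^ (-(p.1 + 1 : ℤ))} : ℝ))) (𝓝[>] (0:ℝ)) (𝓝 0) := by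
          have hub : Tendsto (fun t : ℝ => t^(q-d)/(2:ℝ)^d/2) (𝓝[>] (0:ℝ)) (𝓝 0) := by
            have := ((aux_rpow_zero (by linarith : 0 < q - d)).div_const
              ((2:ℝ)^d)).div_const 2
            simpa using this
          have hub2 : Tendsto (fun t : ℝ => t^(q-d)/(2:ℝ)^d) (𝓝[>] (0:ℝ)) (𝓝 0) := by
            have := (aux_rpow_zero (by linarith : 0 < q - d)).div_const ((2:ℝ)^d)
            simpa using this
          refine tendsto_of_tendsto_of_tendsto_of_le_of_le' tendsto_const_nhds hub2 ?_ ?_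
          · filter_upwards [Ioo_mem_nhdsGT h2apos]
              with t ht
            have htq : (0:ℝ) < t^q := Real.rpow_pos_of_pos ht.1 q
            have hN : (0:ℝ) ≤ (Set.ncard {p : ℕ × ℕ |
                p.2 < 2 ^ p.1 ∧ 2 * t < a ^ (-(p.1 + 1 : ℤ))} : ℝ) := Nat.cast_nonneg _
            positivity
          · filter_upwards [Ioo_mem_nhdsGT h2apos]
              with t ht
            exact (hfb t ht.1 ht.2).2
        have htendE : Tendsto (fun t : ℝ =>
            ((t ^ q * (1 + (Set.ncard {p : ℕ × ℕ |
                p.2 < 2 ^ p.1 ∧ 2 * t < a ^ (-(p.1 + 1 : ℤ))} : ℝ)) : ℝ) : EReal))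
            (𝓝[>] (0:ℝ)) (𝓝 (0 : EReal)) := by
          have := EReal.tendsto_coe.2 htendR
          simpa using this
        exact htendE.limsup_eq
    rw [hset4]
    exact csInf_Ioi
  -- ## Part 5 : logb a 2 < 1
  · have hloga : 0 < Real.log a := Real.log_pos ha1
    rw [Real.logb, div_lt_one hloga]
    exact Real.log_lt_log (by norm_num) (by linarith)

end
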